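/- Let A be a real N × N strictly diagonally dominant matrix with a_{ii} > 0 for all i and a_{ij} ≤ 0 for all i ≠ j. Let G_1, …, G_{N_c} be nonempty, pairwise disjoint subsets of {1, …, N} whose union is {1, …, N}, let P be the associated N × N_c prolongation matrix, and set A_c = Pᵀ A P. Then A_c again has positive diagonal entries, nonpositive off-diagonal entries, and is strictly diagonally dominant: (A_c)_{ii} > 0 for all i, (A_c)_{ij} ≤ 0 for all i ≠ j, and |(A_c)_{ii}| > Σ_{j ≠ i} |(A_c)_{ij}| for every i. -/

import Mathlib

open Matrix

/-- If `A` is strictly diagonally dominant with positive diagonal and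
nonpositive off-diagonal entries, then so is the Galerkin coarse grid matrix
`A_c = Pᵀ A P` built from the prolongation matrix `P` of a disjoint covering family
of aggregates. -/
theorem coarse_grid_matrix_sdd
    {N Nc : ℕ} (hN : 0 < N) (hNc : 0 < Nc)
    (A : Matrix (Fin N) (Fin N) ℝ)
    (hdiag : ∀ i, 0 < A i i)
    (hoff : ∀ i j, i ≠ j → A i j ≤ 0)
    (hsdd : ∀ i, ∑ j ∈ Finset.univ.erase i, |A i j| < |A i i|)
    (G : Fin Nc → Finset (Fin N))
    (hG_nonempty : ∀ j, (G j).Nonempty)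
    (hG_disjoint : ∀ j j', j ≠ j' → Disjoint (G j) (G j'))
    (hG_cover : ∀ i : Fin N, ∃ j, i ∈ G j)
    (P : Matrix (Fin N) (Fin Nc) ℝ)
    (hP : ∀ i j, P i j = if i ∈ G j then 1 else 0)
    (Ac : Matrix (Fin Nc) (Fin Nc) ℝ)
    (hAc : Ac = Pᵀ * A * P) :
    (∀ i, 0 < Ac i i) ∧ (∀ i j, i ≠ j → Ac i j ≤ 0) ∧
    (∀ i, ∑ j ∈ Finset.univ.erase i, |Ac i j| < |Ac i i|) := by
  -- entry formula
  have key : ∀ j j', Ac j j' = ∑ i ∈ G j, ∑ k ∈ G j', A i k := by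
    intro j j'
    subst hAc
    simp only [Matrix.mul_apply, Matrix.transpose_apply, hP, Finset.sum_mul, ite_mul, one_mul,
      zero_mul, mul_ite, mul_one, mul_zero]
    rw [Finset.sum_ite_mem, Finset.univ_inter]
    simp_rw [Finset.sum_ite_mem, Finset.univ_inter]
    exact Finset.sum_comm
  -- row sums of A are positive
  have hrow : ∀ i : Fin N, 0 < ∑ k, A i k := by
    intro i
    have h1 : ∑ k, A i k = A i i + ∑ k ∈ Finset.univ.erase i, A i k := by
      rw [← Finset.add_sum_erase _ _ (Finset.mem_univ i)]
    have h2 : -∑ k ∈ Finset.univ.erase i, A i k ≤ ∑ k ∈ Finset.univ.erase i, |A i k| := by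
      rw [← Finset.sum_neg_distrib]
      exact Finset.sum_le_sum fun k _ => neg_le_abs _
    have h3 := hsdd i
    rw [abs_of_pos (hdiag i)] at h3
    linarith
  -- off-diagonal entries are nonpositive
  have hoffc : ∀ j j', j ≠ j' → Ac j j' ≤ 0 := by
    intro j j' hjj'
    rw [key]
    refine Finset.sum_nonpos fun i hi => Finset.sum_nonpos fun k hk => ?_
    refine hoff i k fun h => ?_
    exact (hG_disjoint j j' hjj').forall_ne_finset hi hk h
  -- row sums of Ac are positive
  have hS : ∀ j, 0 < ∑ j', Ac j j' := by
    intro j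
    have : ∑ j', Ac j j' = ∑ i ∈ G j, ∑ j', ∑ k ∈ G j', A i k := by
      simp only [key]
      exact Finset.sum_comm
    rw [this]
    have hrew : ∀ i : Fin N, ∑ j', ∑ k ∈ G j', A i k = ∑ k, A i k := by
      intro i
      rw [← Finset.sum_biUnion]
      · congr 1
        apply Finset.eq_univ_iff_forall.mpr
        intro k
        rcases hG_cover k with ⟨j', hj'⟩
        exact Finset.mem_biUnion.mpr ⟨j', Finset.mem_univ _, hj'⟩
      · intro a _ b _ hab
        exact hG_disjoint a b hab
    refine Finset.sum_pos (fun i _ => ?_) (hG_nonempty j)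
    rw [hrew]; exact hrow i
  -- diagonal positivity
  have hsplit : ∀ j, ∑ j', Ac j j' = Ac j j + ∑ j' ∈ Finset.univ.erase j, Ac j j' := by
    intro j
    rw [← Finset.add_sum_erase _ _ (Finset.mem_univ j)]
  have habs : ∀ j, ∑ j' ∈ Finset.univ.erase j, |Ac j j'| =
      -∑ j' ∈ Finset.univ.erase j, Ac j j' := by
    intro j
    rw [← Finset.sum_neg_distrib]
    refine Finset.sum_congr rfl fun j' hj' => ?_
    exact abs_of_nonpos (hoffc j j' (Finset.ne_of_mem_erase hj').symm)
  have hdiagc : ∀ j, 0 < Ac j j := by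
    intro j
    have h1 := hS j
    have h2 := hsplit j
    have h3 := habs j
    have h4 : 0 ≤ ∑ j' ∈ Finset.univ.erase j, |Ac j j'| :=
      Finset.sum_nonneg fun _ _ => abs_nonneg _
    linarith
  refine ⟨hdiagc, hoffc, fun j => ?_⟩
  have h1 := hS j
  have h2 := hsplit j
  have h3 := habs j
  rw [abs_of_pos (hdiagc j)]
  linarith
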